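/- With x_i = f(i)/m_i where f is the recursive construction (f(1)=m_1; f(i)=m_i(2Σ_{j<i}f(j)+1) for 2≤i≤n; f(i)=(m_{i−1}+1)f(i−1)/m_{i−1} for n+1≤i≤n+r−1; f(n+r)=(m_{n+r−1}+1)f(n+r−1)/m_{n+r−1}+(2^r−L)f(n+1); m_{n+1}=⋯=m_{n+r}=1), the following growth inequalities hold: (a) for each i ∈ [n−1] and any a_j ∈ [m_j], a_{i+1} x_{i+1} > 2 Σ_{j=1}^i a_j x_j; (b) x_{n+1} > Σ_{j=1}^n a_j x_j for any a_j ∈ [m_j]; (c) for each i ∈ [n+1 : n+r−1], x_{i+1} > Σ_{j=1}^n a_j x_j + Σ_{j=n+1}^i x_j. -/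
import Mathlib


/-- with `x i = f i / m i` (exact division) where `f` is the recursion of
Construction 2, the growth inequalities hold:
(a) for each `i ∈ [n-1]` and coefficients `a j ∈ [m j]`,
    `a (i+1) * x (i+1) > 2 * ∑_{j=1}^i a j * x j`;
(b) `x (n+1) > ∑_{j=1}^n a j * x j`;
(c) for `i ∈ [n+1 : n+r-1]`, `x (i+1) > ∑_{j=1}^n a j * x j + ∑_{j=n+1}^i x j`. -/
theorem stmt_8 (L r n : ℕ) (hL : 0 < L) (hr : 0 < r) (hLr : L ≤ 2 ^ r) (hn : 0 < n)
    (m f : ℕ → ℕ) (hm : ∀ i, 0 < m i)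
    (hm1 : ∀ i, n + 1 ≤ i → i ≤ n + r → m i = 1)
    (hf1 : f 1 = m 1)
    (hf2 : ∀ i, 2 ≤ i → i ≤ n → f i = m i * (2 * (∑ j ∈ Finset.Icc 1 (i - 1), f j) + 1))
    (hdvd : ∀ i, 1 ≤ i → i ≤ n + r → m i ∣ f i)
    (hf3 : ∀ i, n + 1 ≤ i → i ≤ n + r - 1 →
      f i = (m (i - 1) + 1) * (f (i - 1) / m (i - 1)))
    (hf4 : f (n + r) =
      (m (n + r - 1) + 1) * (f (n + r - 1) / m (n + r - 1)) + (2 ^ r - L) * f (n + 1))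
    (x : ℕ → ℕ) (hx : ∀ i, x i * m i = f i) :
    (∀ i, 1 ≤ i → i + 1 ≤ n → ∀ a : ℕ → ℕ, (∀ j, 1 ≤ j → j ≤ n → 1 ≤ a j ∧ a j ≤ m j) →
      2 * ∑ j ∈ Finset.Icc 1 i, a j * x j < a (i + 1) * x (i + 1)) ∧
    (∀ a : ℕ → ℕ, (∀ j, 1 ≤ j → j ≤ n → 1 ≤ a j ∧ a j ≤ m j) →
      ∑ j ∈ Finset.Icc 1 n, a j * x j < x (n + 1)) ∧
    (∀ i, n + 1 ≤ i → i ≤ n + r - 1 → ∀ a : ℕ → ℕ,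
      (∀ j, 1 ≤ j → j ≤ n → 1 ≤ a j ∧ a j ≤ m j) →
      (∑ j ∈ Finset.Icc 1 n, a j * x j) + ∑ j ∈ Finset.Icc (n + 1) i, x j < x (i + 1)) := by
  have hdivx : ∀ i, f i / m i = x i := fun i => by
    rw [← hx i]; exact Nat.mul_div_cancel _ (hm i)
  have hxval : ∀ i, 2 ≤ i → i ≤ n →
      x i = 2 * (∑ j ∈ Finset.Icc 1 (i - 1), f j) + 1 := by
    intro i h2 hle
    have h := hf2 i h2 hle
    have : m i * x i = m i * (2 * (∑ j ∈ Finset.Icc 1 (i - 1), f j) + 1) := by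
      rw [mul_comm, hx, h]
    exact Nat.eq_of_mul_eq_mul_left (hm i) this
  have hx1 : x 1 = 1 := by
    have : m 1 * x 1 = m 1 * 1 := by rw [mul_comm, hx, hf1, mul_one]
    exact Nat.eq_of_mul_eq_mul_left (hm 1) this
  -- bound a j * x j ≤ f j
  have habx : ∀ a : ℕ → ℕ, (∀ j, 1 ≤ j → j ≤ n → 1 ≤ a j ∧ a j ≤ m j) →
      ∀ j, 1 ≤ j → j ≤ n → a j * x j ≤ f j := by
    intro a ha j h1 h2
    calc a j * x j ≤ m j * x j := Nat.mul_le_mul_right _ (ha j h1 h2).2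
    _ = f j := by rw [mul_comm, hx]
  have hsum : ∀ a : ℕ → ℕ, (∀ j, 1 ≤ j → j ≤ n → 1 ≤ a j ∧ a j ≤ m j) →
      ∀ i, i ≤ n → ∑ j ∈ Finset.Icc 1 i, a j * x j ≤ ∑ j ∈ Finset.Icc 1 i, f j := by
    intro a ha i hi
    refine Finset.sum_le_sum ?_
    intro j hj
    rw [Finset.mem_Icc] at hj
    exact habx a ha j hj.1 (le_trans hj.2 hi)
  have hxnpos : 0 < x n := by
    rcases Nat.lt_or_ge n 2 with h | h
    · interval_cases n
      omega
    · have := hxval n h le_rfl; omega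
  have hfxn : f n = x n * m n := (hx n).symm
  -- f (n+1) = f n + x n
  have hfn1 : f (n + 1) = f n + x n := by
    rcases Nat.lt_or_ge r 2 with h | h
    · -- r = 1
      have hr1 : r = 1 := by omega
      subst hr1
      simp only [Nat.add_sub_cancel] at hf4
      rw [hdivx n] at hf4
      have hLc : L = 1 ∨ L = 2 := by omega
      rcases hLc with hLc | hLc
      · subst hLc
        norm_num at hf4
        omega
      · subst hLc
        norm_num at hf4
        rw [hf4, hfxn]; ring
    · have h3 := hf3 (n + 1) le_rfl (by omega)
      simp only [Nat.add_sub_cancel] at h3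
      rw [hdivx n] at h3
      rw [h3, hfxn]; ring
  have hmtail : ∀ i, n + 1 ≤ i → i ≤ n + r → x i = f i := by
    intro i h1 h2
    have := hx i
    rw [hm1 i h1 h2, mul_one] at this
    exact this
  have hxn1 : x (n + 1) = f n + x n := by
    rw [hmtail (n + 1) le_rfl (by omega), hfn1]
  -- part (b)
  have partb : ∀ a : ℕ → ℕ, (∀ j, 1 ≤ j → j ≤ n → 1 ≤ a j ∧ a j ≤ m j) →
      ∑ j ∈ Finset.Icc 1 n, a j * x j < x (n + 1) := by
    intro a ha
    rcases Nat.lt_or_ge n 2 with h | h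
    · have hn1 : n = 1 := by omega
      subst hn1
      rw [Finset.Icc_self, Finset.sum_singleton, hx1, hxn1, hx1, mul_one]
      have := (ha 1 le_rfl le_rfl).2
      omega
    · obtain ⟨k, rfl⟩ : ∃ k, n = k + 1 := ⟨n - 1, by omega⟩
      rw [Finset.sum_Icc_succ_top (by omega : 1 ≤ k + 1)]
      have h1 : ∑ j ∈ Finset.Icc 1 k, a j * x j ≤ ∑ j ∈ Finset.Icc 1 k, f j :=
        hsum a ha k (by omega)
      have h2 : a (k + 1) * x (k + 1) ≤ f (k + 1) := habx a ha (k + 1) (by omega) le_rfl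
      have h3 := hxval (k + 1) h le_rfl
      simp only [Nat.add_sub_cancel] at h3
      rw [hxn1]
      omega
  -- doubling on the tail
  have hstep : ∀ i, n + 1 ≤ i → i ≤ n + r - 1 → 2 * x i ≤ x (i + 1) := by
    intro i h1 h2
    have hfix : f i = x i := (hmtail i h1 (by omega)).symm
    rcases Nat.lt_or_ge (i + 1) (n + r) with h | h
    · have h3 := hf3 (i + 1) (by omega) (by omega)
      simp only [Nat.add_sub_cancel] at h3
      rw [hdivx i, hm1 i h1 (by omega)] at h3
      rw [hmtail (i + 1) (by omega) (by omega), h3]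
    · have heq : n + r = i + 1 := by omega
      have heq2 : n + r - 1 = i := by omega
      rw [heq2, heq] at hf4
      rw [hdivx i, hm1 i h1 (by omega)] at hf4
      rw [hmtail (i + 1) (by omega) (by omega), hf4]
      omega
  refine ⟨?_, partb, ?_⟩
  · -- part (a)
    intro i h1 h2 a ha
    have h3 := hxval (i + 1) (by omega) h2
    simp only [Nat.add_sub_cancel] at h3
    have h4 : ∑ j ∈ Finset.Icc 1 i, a j * x j ≤ ∑ j ∈ Finset.Icc 1 i, f j :=
      hsum a ha i (by omega)
    have h5 : x (i + 1) ≤ a (i + 1) * x (i + 1) :=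
      Nat.le_mul_of_pos_left _ (ha (i + 1) (by omega) h2).1
    omega
  · -- part (c)
    intro i hi1
    induction i, hi1 using Nat.le_induction with
    | base =>
      intro hi2 a ha
      rw [Finset.Icc_self, Finset.sum_singleton]
      have h1 := partb a ha
      have h2 := hstep (n + 1) le_rfl hi2
      omega
    | succ i hi ih =>
      intro hi2 a ha
      have IH := ih (by omega) a ha
      have h2 := hstep (i + 1) (by omega) hi2
      rw [Finset.sum_Icc_succ_top (by omega : n + 1 ≤ i + 1)]
      omega
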